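/- The following equations hold in U(sl₂): [w, xy] = yzxy − xyzx + xyx − yxy, [w, yz] = zxyz − yzxy + yzy − zyz, and [w, zx] = xyzx − zxyz + zxz − xzx. -/
import Mathlib


open scoped TensorProduct

noncomputable section

namespace RacahPaper

variable (F : Type) [Field F]

/-- Defining relations of `U(sl₂)`: generators `e = ι 0`, `f = ι 1`, `h = ι 2` with
`he - eh = 2e`, `hf - fh = -2f`, `ef - fe = h`. -/
inductive slRel : FreeAlgebra F (Fin 3) → FreeAlgebra F (Fin 3) → Prop
  | he : slRel (FreeAlgebra.ι F 2 * FreeAlgebra.ι F 0 - FreeAlgebra.ι F 0 * FreeAlgebra.ι F 2)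
      (2 * FreeAlgebra.ι F 0)
  | hf : slRel (FreeAlgebra.ι F 2 * FreeAlgebra.ι F 1 - FreeAlgebra.ι F 1 * FreeAlgebra.ι F 2)
      (-(2 * FreeAlgebra.ι F 1))
  | ef : slRel (FreeAlgebra.ι F 0 * FreeAlgebra.ι F 1 - FreeAlgebra.ι F 1 * FreeAlgebra.ι F 0)
      (FreeAlgebra.ι F 2)

/-- The universal enveloping algebra `U(sl₂)`. -/
abbrev U := RingQuot (slRel F)

/-- The generator `e` of `U(sl₂)`. -/
def e : U F := RingQuot.mkAlgHom F (slRel F) (FreeAlgebra.ι F 0)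

/-- The generator `f` of `U(sl₂)`. -/
def f : U F := RingQuot.mkAlgHom F (slRel F) (FreeAlgebra.ι F 1)

/-- The generator `h` of `U(sl₂)`. -/
def h : U F := RingQuot.mkAlgHom F (slRel F) (FreeAlgebra.ι F 2)

/-- The equitable generator `x = -f - h/2`. -/
def ux : U F := -f F - (2 : F)⁻¹ • h F

/-- The equitable generator `y = h/2`. -/
def uy : U F := (2 : F)⁻¹ • h F

/-- The equitable generator `z = e - h/2`. -/
def uz : U F := e F - (2 : F)⁻¹ • h F

/-- The normalized Casimir element `Λ = ef + h(h-2)/4` of `U(sl₂)`. -/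
def Lam : U F := e F * f F + (4 : F)⁻¹ • (h F * (h F - 2))

/-- `ν_x = f/2`. -/
def nux : U F := (2 : F)⁻¹ • f F

/-- `ν_z = e/2`. -/
def nuz : U F := (2 : F)⁻¹ • e F

/-- `U_n`: the span of the `e^i h^j f^k` with `k - i = n`. -/
def Usub (n : ℤ) : Submodule F (U F) :=
  Submodule.span F {u : U F | ∃ i j k : ℕ, (k : ℤ) - (i : ℤ) = n ∧ u = e F ^ i * h F ^ j * f F ^ k}

-- Racah algebra
/-- Generator `A` of the free algebra. -/
def fA : FreeAlgebra F (Fin 4) := FreeAlgebra.ι F 0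
/-- Generator `B` of the free algebra. -/
def fB : FreeAlgebra F (Fin 4) := FreeAlgebra.ι F 1
/-- Generator `C` of the free algebra. -/
def fC : FreeAlgebra F (Fin 4) := FreeAlgebra.ι F 2
/-- Generator `D` of the free algebra. -/
def fD : FreeAlgebra F (Fin 4) := FreeAlgebra.ι F 3

/-- `α = [A,D] + AC - BA` in the free algebra. -/
def falpha : FreeAlgebra F (Fin 4) := (fA F * fD F - fD F * fA F) + fA F * fC F - fB F * fA F
/-- `β = [B,D] + BA - CB` in the free algebra. -/
def fbeta : FreeAlgebra F (Fin 4) := (fB F * fD F - fD F * fB F) + fB F * fA F - fC F * fB F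
/-- `γ = [C,D] + CB - AC` in the free algebra. -/
def fgamma : FreeAlgebra F (Fin 4) := (fC F * fD F - fD F * fC F) + fC F * fB F - fA F * fC F

/-- Defining relations of the Racah algebra: `[A,B] = [B,C] = [C,A] = 2D` and each of
`α, β, γ` commutes with each of the generators `A, B, C, D`. -/
inductive racahRel : FreeAlgebra F (Fin 4) → FreeAlgebra F (Fin 4) → Prop
  | AB : racahRel (fA F * fB F - fB F * fA F) (2 * fD F)
  | BC : racahRel (fB F * fC F - fC F * fB F) (2 * fD F)
  | CA : racahRel (fC F * fA F - fA F * fC F) (2 * fD F)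
  | calpha (i : Fin 4) : racahRel (falpha F * FreeAlgebra.ι F i) (FreeAlgebra.ι F i * falpha F)
  | cbeta (i : Fin 4) : racahRel (fbeta F * FreeAlgebra.ι F i) (FreeAlgebra.ι F i * fbeta F)
  | cgamma (i : Fin 4) : racahRel (fgamma F * FreeAlgebra.ι F i) (FreeAlgebra.ι F i * fgamma F)

/-- The Racah algebra `ℜ`. -/
abbrev Racah := RingQuot (racahRel F)

/-- Generator `A` of the Racah algebra. -/
def A : Racah F := RingQuot.mkAlgHom F (racahRel F) (fA F)
/-- Generator `B` of the Racah algebra. -/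
def B : Racah F := RingQuot.mkAlgHom F (racahRel F) (fB F)
/-- Generator `C` of the Racah algebra. -/
def C : Racah F := RingQuot.mkAlgHom F (racahRel F) (fC F)
/-- Generator `D` of the Racah algebra. -/
def D : Racah F := RingQuot.mkAlgHom F (racahRel F) (fD F)

/-- `α = [A,D] + AC - BA` in the Racah algebra. -/
def alpha : Racah F := (A F * D F - D F * A F) + A F * C F - B F * A F
/-- `β = [B,D] + BA - CB` in the Racah algebra. -/
def beta : Racah F := (B F * D F - D F * B F) + B F * A F - C F * B F
/-- `γ = [C,D] + CB - AC` in the Racah algebra. -/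
def gamma : Racah F := (C F * D F - D F * C F) + C F * B F - A F * C F
/-- `δ = A + B + C` in the Racah algebra. -/
def delta : Racah F := A F + B F + C F

/-- `Ω_A = D² + (BAC + CAB)/2 + A² + Bγ - Cβ - Aδ`. -/
def OmegaA : Racah F :=
  D F ^ 2 + (2 : F)⁻¹ • (B F * A F * C F + C F * A F * B F) + A F ^ 2
    + B F * gamma F - C F * beta F - A F * delta F

/-- `Ω_B = D² + (CBA + ABC)/2 + B² + Cα - Aγ - Bδ`. -/
def OmegaB : Racah F :=
  D F ^ 2 + (2 : F)⁻¹ • (C F * B F * A F + A F * B F * C F) + B F ^ 2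
    + C F * alpha F - A F * gamma F - B F * delta F

/-- `Ω_C = D² + (ACB + BCA)/2 + C² + Aβ - Bα - Cδ`. -/
def OmegaC : Racah F :=
  D F ^ 2 + (2 : F)⁻¹ • (A F * C F * B F + B F * C F * A F) + C F ^ 2
    + A F * beta F - B F * alpha F - C F * delta F

-- the tensor algebra F[a,b,c] ⊗ U(sl2)
/-- The polynomial algebra `F[a,b,c]`. -/
abbrev P := MvPolynomial (Fin 3) F

/-- The tensor product algebra `F[a,b,c] ⊗ U(sl₂)`. -/
abbrev T := P F ⊗[F] U F

/-- The indeterminate `a`. -/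
def pa : P F := MvPolynomial.X 0
/-- The indeterminate `b`. -/
def pb : P F := MvPolynomial.X 1
/-- The indeterminate `c`. -/
def pc : P F := MvPolynomial.X 2

/-- `A♮`. -/
def Anat : T F :=
  (pa F * (pa F + 1)) ⊗ₜ[F] (1 : U F) + (pb F - pc F - pa F) ⊗ₜ[F] ux F
    + (pa F + pb F - pc F + 1) ⊗ₜ[F] uy F - (1 : P F) ⊗ₜ[F] (ux F * uy F)

/-- `B♮`. -/
def Bnat : T F :=
  (pb F * (pb F + 1)) ⊗ₜ[F] (1 : U F) + (pc F - pa F - pb F) ⊗ₜ[F] uy F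
    + (pb F + pc F - pa F + 1) ⊗ₜ[F] uz F - (1 : P F) ⊗ₜ[F] (uy F * uz F)

/-- `C♮`. -/
def Cnat : T F :=
  (pc F * (pc F + 1)) ⊗ₜ[F] (1 : U F) + (pa F - pb F - pc F) ⊗ₜ[F] uz F
    + (pc F + pa F - pb F + 1) ⊗ₜ[F] ux F - (1 : P F) ⊗ₜ[F] (uz F * ux F)

/-- `D♮`. -/
def Dnat : T F :=
  (1 : P F) ⊗ₜ[F] (uz F * uy F * ux F + uz F * ux F)
    + (pc F + pb F * (pc F + pa F - pb F)) ⊗ₜ[F] ux F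
    + (pa F + pc F * (pa F + pb F - pc F)) ⊗ₜ[F] uy F
    + (pb F + pa F * (pb F + pc F - pa F)) ⊗ₜ[F] uz F
    + (pb F - pc F) ⊗ₜ[F] (ux F * uy F)
    + (pc F - pa F) ⊗ₜ[F] (uy F * uz F)
    + (pa F - pb F) ⊗ₜ[F] (uz F * ux F)

/-- `R = 2 ⊗ yν_x + 2(c+a-b+1) ⊗ ν_x`. -/
def Rel : T F :=
  (2 : P F) ⊗ₜ[F] (uy F * nux F) + (2 * (pc F + pa F - pb F + 1)) ⊗ₜ[F] nux F

/-- `L = -2 ⊗ yν_z - 2(a-b-c-1) ⊗ ν_z`. -/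
def Lel : T F :=
  -((2 : P F) ⊗ₜ[F] (uy F * nuz F)) - (2 * (pa F - pb F - pc F - 1)) ⊗ₜ[F] nuz F

/-- `θ = 1⊗y - b⊗1`. -/
def theta : T F := (1 : P F) ⊗ₜ[F] uy F - pb F ⊗ₜ[F] (1 : U F)

/-- `ϑ = 1⊗y + a⊗1`. -/
def vartheta : T F := (1 : P F) ⊗ₜ[F] uy F + pa F ⊗ₜ[F] (1 : U F)

/-- `F[a,b,c] ⊗ U_n` as a subspace of `F[a,b,c] ⊗ U(sl₂)`. -/
def TU (n : ℤ) : Submodule F (T F) :=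
  Submodule.span F {t : T F | ∃ (p : P F) (u : U F), u ∈ Usub F n ∧ t = p ⊗ₜ[F] u}


section AuxKey
variable {R : Type*} [Ring R]

lemma aux_key (x y z : R) (hxy : x*y - y*x = x + y) (hyz : y*z - z*y = y + z)
    (hzx : z*x - x*z = z + x) :
    ((z*y*x + z*x) * (x*y) - (x*y) * (z*y*x + z*x)
      = y*z*x*y - x*y*z*x + x*y*x - y*x*y) ∧
    ((z*y*x + z*x) * (y*z) - (y*z) * (z*y*x + z*x)
      = z*x*y*z - y*z*x*y + y*z*y - z*y*z) ∧
    ((z*y*x + z*x) * (z*x) - (z*x) * (z*y*x + z*x)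
      = x*y*z*x - z*x*y*z + z*x*z - x*z*x) := by
  have hyx : y * x = x * y - x - y := by
    rw [sub_eq_iff_eq_add] at hxy; rw [hxy]; abel
  have hzy : z * y = y * z - y - z := by
    rw [sub_eq_iff_eq_add] at hyz; rw [hyz]; abel
  have hzx' : z * x = x * z + x + z := by
    rw [sub_eq_iff_eq_add] at hzx; rw [hzx]; abel
  have hyx2 : ∀ t : R, y * (x * t) = x * (y * t) - x * t - y * t := by
    intro t; rw [← mul_assoc, hyx, sub_mul, sub_mul, mul_assoc]
  have hzy2 : ∀ t : R, z * (y * t) = y * (z * t) - y * t - z * t := by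
    intro t; rw [← mul_assoc, hzy, sub_mul, sub_mul, mul_assoc]
  have hzx2 : ∀ t : R, z * (x * t) = x * (z * t) + x * t + z * t := by
    intro t; rw [← mul_assoc, hzx', add_mul, add_mul, mul_assoc]
  refine ⟨?_, ?_, ?_⟩ <;>
  · simp only [mul_assoc, mul_sub, sub_mul, mul_add, add_mul, hyx, hzy, hzx', hyx2, hzy2, hzx2]
    abel

set_option linter.unreachableTactic false in
set_option linter.unusedTactic false in
lemma aux_genrels {F : Type} [Field F] [Algebra F R]
    (c : F) (hc : c * 2 = 1) (E FE H : R)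
    (hhe : H * E = E * H + (2:F) • E)
    (hhf : H * FE = FE * H - (2:F) • FE)
    (hef : E * FE = FE * E + H) :
    ((-FE - c • H) * (c • H) - (c • H) * (-FE - c • H) = (-FE - c • H) + c • H) ∧
    ((c • H) * (E - c • H) - (E - c • H) * (c • H) = c • H + (E - c • H)) ∧
    ((E - c • H) * (-FE - c • H) - (-FE - c • H) * (E - c • H)
      = (E - c • H) + (-FE - c • H)) := by
  refine ⟨?_, ?_, ?_⟩
  · have step : (-FE - c • H) * (c • H) - (c • H) * (-FE - c • H)
        = c • (H * FE) - c • (FE * H) := by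
      simp only [smul_mul_assoc, mul_smul_comm, smul_smul, neg_mul, mul_neg,
        sub_mul, mul_sub, smul_sub, smul_neg, neg_sub, neg_neg]
      module
    rw [step, hhf]
    match_scalars <;> first | ring1 | linear_combination hc | linear_combination -hc |
      linear_combination (-2:F)*hc | linear_combination (2:F)*hc
  · have step : (c • H) * (E - c • H) - (E - c • H) * (c • H)
        = c • (H * E) - c • (E * H) := by
      simp only [smul_mul_assoc, mul_smul_comm, smul_smul, neg_mul, mul_neg,
        sub_mul, mul_sub, smul_sub, smul_neg, neg_sub, neg_neg]
      module
    rw [step, hhe]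
    match_scalars <;> first | ring1 | linear_combination hc | linear_combination -hc |
      linear_combination (-2:F)*hc | linear_combination (2:F)*hc
  · have step : (E - c • H) * (-FE - c • H) - (-FE - c • H) * (E - c • H)
        = -(E * FE) + FE * E + (c • (H * E) - c • (E * H))
          + (c • (H * FE) - c • (FE * H)) := by
      simp only [smul_mul_assoc, mul_smul_comm, smul_smul, neg_mul, mul_neg,
        sub_mul, mul_sub, smul_sub, smul_neg, neg_sub, neg_neg]
      module
    rw [step, hhe, hhf, hef]
    match_scalars <;> first | ring1 | linear_combination hc | linear_combination -hc |
      linear_combination (-2:F)*hc | linear_combination (2:F)*hc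

end AuxKey

lemma aux_rel_he : h F * e F = e F * h F + (2:F) • e F := by
  have := RingQuot.mkAlgHom_rel F (slRel.he (F := F))
  simp only [map_sub, map_mul, map_ofNat] at this
  rw [sub_eq_iff_eq_add] at this
  rw [e, h, this, two_smul, two_mul]; abel

lemma aux_rel_hf : h F * f F = f F * h F - (2:F) • f F := by
  have := RingQuot.mkAlgHom_rel F (slRel.hf (F := F))
  simp only [map_sub, map_mul, map_neg, map_ofNat] at this
  rw [sub_eq_iff_eq_add] at this
  rw [f, h, this, two_smul, two_mul]; abel

lemma aux_rel_ef : e F * f F = f F * e F + h F := by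
  have := RingQuot.mkAlgHom_rel F (slRel.ef (F := F))
  simp only [map_sub, map_mul] at this
  rw [sub_eq_iff_eq_add] at this
  rw [e, f, h, this]; abel

lemma aux_equitable (hchar : (2 : F) ≠ 0) :
    (ux F * uy F - uy F * ux F = ux F + uy F) ∧
    (uy F * uz F - uz F * uy F = uy F + uz F) ∧
    (uz F * ux F - ux F * uz F = uz F + ux F) := by
  have hc : (2:F)⁻¹ * 2 = 1 := inv_mul_cancel₀ hchar
  have := aux_genrels (R := U F) ((2:F)⁻¹) hc (e F) (f F) (h F)
    (aux_rel_he F) (aux_rel_hf F) (aux_rel_ef F)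
  rw [ux, uy, uz]
  exact this

theorem statement11 (hchar : (2 : F) ≠ 0) :
    (uz F * uy F * ux F + uz F * ux F) * (ux F * uy F)
        - (ux F * uy F) * (uz F * uy F * ux F + uz F * ux F)
      = uy F * uz F * ux F * uy F - ux F * uy F * uz F * ux F
        + ux F * uy F * ux F - uy F * ux F * uy F ∧
    (uz F * uy F * ux F + uz F * ux F) * (uy F * uz F)
        - (uy F * uz F) * (uz F * uy F * ux F + uz F * ux F)
      = uz F * ux F * uy F * uz F - uy F * uz F * ux F * uy F
        + uy F * uz F * uy F - uz F * uy F * uz F ∧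
    (uz F * uy F * ux F + uz F * ux F) * (uz F * ux F)
        - (uz F * ux F) * (uz F * uy F * ux F + uz F * ux F)
      = ux F * uy F * uz F * ux F - uz F * ux F * uy F * uz F
        + uz F * ux F * uz F - ux F * uz F * ux F := by
  obtain ⟨hxy, hyz, hzx⟩ := aux_equitable F hchar
  exact aux_key (ux F) (uy F) (uz F) hxy hyz hzx

end RacahPaper
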